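/- Any two S-normal decompositions of the same element of a left-cancellative monoid with no nontrivial invertible elements, after discarding trailing identity entries, are equal: if (a1,...,ap) and (b1,...,bp) are S-normal decompositions of g with all entries non-identity, then p = q and ai = bi for all i. -/

import Mathlib

/-- A pair `(g1, g2)` is `S`-greedy. -/
def SGreedy {M : Type*} [Monoid M] (S : Set M) (g1 g2 : M) : Prop :=
  ∀ a ∈ S, ∀ f : M, (∃ z, a * z = f * g1 * g2) → ∃ z, a * z = f * g1

/-- A list is `S`-normal: adjacent pairs are `S`-greedy and entries lie in `S ∪ {1}`. -/
def SNormal {M : Type*} [Monoid M] (S : Set M) (l : List M) : Prop :=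
  l.Chain' (SGreedy S) ∧ ∀ x ∈ l, x ∈ S ∨ x = 1

private lemma head_div {M : Type*} [Monoid M] (S : Set M) :
    ∀ (rest : List M) (g1 : M), List.Chain' (SGreedy S) (g1 :: rest) →
      ∀ a ∈ S, ∀ f : M, (∃ z, a * z = f * (g1 :: rest).prod) → ∃ z, a * z = f * g1
  | [], g1, _, a, _, f, ⟨z, hz⟩ => ⟨z, by simpa using hz⟩
  | g2 :: rest, g1, hc, a, ha, f, ⟨z, hz⟩ => by
    have hc2 : List.Chain' (SGreedy S) (g2 :: rest) := hc.tail
    have hgr : SGreedy S g1 g2 := List.isChain_cons_cons.mp hc |>.1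
    have h1 : ∃ z, a * z = (f * g1) * (g2 :: rest).prod := by
      refine ⟨z, ?_⟩
      simpa [List.prod_cons, mul_assoc] using hz
    have h2 := head_div S rest g2 hc2 a ha (f * g1) h1
    obtain ⟨w, hw⟩ := h2
    exact hgr a ha f ⟨w, hw⟩

/-- In a left-cancellative monoid with no nontrivial invertible elements, two
`S`-normal decompositions of the same element all of whose entries are
non-identity must coincide. -/
theorem SNormal_decomposition_unique (M : Type*) [Monoid M]
    (hcancel : ∀ f g g' : M, f * g = f * g' → g = g')
    (hnu : ∀ x y : M, x * y = 1 → x = 1 ∧ y = 1)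
    (S : Set M) (g : M) (l1 l2 : List M)
    (h1 : SNormal S l1) (h2 : SNormal S l2)
    (hp1 : l1.prod = g) (hp2 : l2.prod = g)
    (hn1 : ∀ x ∈ l1, x ≠ 1) (hn2 : ∀ x ∈ l2, x ≠ 1) :
    l1 = l2 := by
  induction l1 generalizing l2 g with
  | nil =>
    cases l2 with
    | nil => rfl
    | cons b r2 =>
      exfalso
      simp only [List.prod_nil] at hp1
      rw [List.prod_cons, ← hp1] at hp2
      exact hn2 b (List.mem_cons_self) (hnu b r2.prod hp2).1
  | cons a r1 ih =>
    cases l2 with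
    | nil =>
      exfalso
      simp only [List.prod_nil] at hp2
      rw [List.prod_cons, ← hp2] at hp1
      exact hn1 a (List.mem_cons_self) (hnu a r1.prod hp1).1
    | cons b r2 =>
      have hprod : a * r1.prod = b * r2.prod := by
        rw [← List.prod_cons, ← List.prod_cons, hp1, hp2]
      have haS : a ∈ S := by
        rcases h1.2 a (List.mem_cons_self) with h | h
        · exact h
        · exact absurd h (hn1 a (List.mem_cons_self))
      have hbS : b ∈ S := by
        rcases h2.2 b (List.mem_cons_self) with h | h
        · exact h
        · exact absurd h (hn2 b (List.mem_cons_self))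
      -- b divides a and a divides b
      have hba : ∃ z, b * z = a := by
        have := head_div S r1 a h1.1 b hbS 1
          ⟨r2.prod, by simpa [List.prod_cons] using hprod.symm⟩
        simpa using this
      have hab : ∃ z, a * z = b := by
        have := head_div S r2 b h2.1 a haS 1
          ⟨r1.prod, by simpa [List.prod_cons] using hprod⟩
        simpa using this
      obtain ⟨z, hz⟩ := hab
      obtain ⟨w, hw⟩ := hba
      have hzw : z * w = 1 := by
        apply hcancel a
        rw [← mul_assoc, hz, hw, mul_one]
      have hz1 : z = 1 := (hnu z w hzw).1
      have hb : a = b := by rw [← hz, hz1, mul_one]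
      subst hb
      have htail : r1.prod = r2.prod := hcancel a _ _ hprod
      have hr : r1 = r2 := by
        exact ih r1.prod r2 ⟨h1.1.tail, fun x hx => h1.2 x (List.mem_cons_of_mem _ hx)⟩
          ⟨h2.1.tail, fun x hx => h2.2 x (List.mem_cons_of_mem _ hx)⟩ rfl htail.symm
          (fun x hx => hn1 x (List.mem_cons_of_mem _ hx))
          (fun x hx => hn2 x (List.mem_cons_of_mem _ hx))
      rw [hr]
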